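/- For every positive integer n and every integer k with 0 ≤ k ≤ n-1, the number of 132-avoiding permutations of [n] having exactly k descents equals the number of 132-avoiding permutations of [n] having exactly n-1-k descents. -/

import Mathlib

open List

/-- A permutation `p` of `[n]` (modelled on `Fin n`, 0-based) is 132-avoiding if there
are no positions `i < j < k` with `p i < p k < p j`. -/
def Avoids132 {n : ℕ} (p : Equiv.Perm (Fin n)) : Prop :=
  ¬ ∃ i j k : Fin n, i < j ∧ j < k ∧ p i < p k ∧ p k < p j

/-- The descent set of `p`, in the 1-based convention of the paper: `i ∈ D(p)` iff
`1 ≤ i ≤ n-1` and `p_i > p_{i+1}`, where `p_i` denotes the `i`-th entry of `p` in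
1-based indexing (so `p_i = p ⟨i-1⟩` in 0-based indexing). -/
def DescentSet {n : ℕ} (p : Equiv.Perm (Fin n)) : Finset ℕ :=
  (Finset.range n).filter (fun i => ∃ h : 1 ≤ i ∧ i < n, p ⟨i, h.2⟩ < p ⟨i - 1, by omega⟩)

def desL : List ℕ → ℕ
  | a :: b :: t => desL (b :: t) + (if b < a then 1 else 0)
  | _ => 0

def AvoidL (l : List ℕ) : Prop := ∀ x y z : ℕ, [x, y, z] <+ l → ¬ (x < z ∧ z < y)

theorem pair_sublist (l : List ℕ) (j k : ℕ) (hjk : j < k) (hk : k < l.length) :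
    [l[j], l[k]] <+ l := by
  have hdrop : l.drop j = l[j] :: l.drop (j+1) := List.drop_eq_getElem_cons (by omega)
  have hlen : k - (j+1) < (l.drop (j+1)).length := by simp; omega
  have hget : (l.drop (j+1))[k - (j+1)] = l[k] := by
    rw [List.getElem_drop]; congr 1; omega
  have hmem : l[k] ∈ l.drop (j+1) := hget ▸ List.getElem_mem hlen
  have h1 : [l[j], l[k]] <+ l[j] :: l.drop (j+1) :=
    List.Sublist.cons₂ _ (List.singleton_sublist.mpr hmem)
  calc [l[j], l[k]] <+ l.drop j := by rw [hdrop]; exact h1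
    _ <+ l := List.drop_sublist _ _

theorem triple_sublist (l : List ℕ) (i j k : ℕ) (hij : i < j) (hjk : j < k)
    (hk : k < l.length) : [l[i], l[j], l[k]] <+ l := by
  have hdrop : l.drop i = l[i] :: l.drop (i+1) := List.drop_eq_getElem_cons (by omega)
  have hj' : j - (i+1) < (l.drop (i+1)).length := by simp; omega
  have hk' : k - (i+1) < (l.drop (i+1)).length := by simp; omega
  have h2 := pair_sublist (l.drop (i+1)) (j - (i+1)) (k - (i+1)) (by omega) hk'
  have e1 : (l.drop (i+1))[j - (i+1)] = l[j] := by rw [List.getElem_drop]; congr 1; omega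
  have e2 : (l.drop (i+1))[k - (i+1)] = l[k] := by rw [List.getElem_drop]; congr 1; omega
  rw [e1, e2] at h2
  calc [l[i], l[j], l[k]] <+ l.drop i := by rw [hdrop]; exact List.Sublist.cons₂ _ h2
    _ <+ l := List.drop_sublist _ _


theorem desL_nil : desL [] = 0 := rfl
theorem desL_single (a : ℕ) : desL [a] = 0 := rfl
theorem desL_cons₂ (a b : ℕ) (t : List ℕ) :
    desL (a :: b :: t) = desL (b :: t) + (if b < a then 1 else 0) := rfl

theorem desL_cons (x : ℕ) (w : List ℕ) :
    desL (x :: w) = desL w + (if w.headD x < x then 1 else 0) := by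
  cases w with
  | nil => simp [desL]
  | cons b t => simp [desL_cons₂]

theorem desL_append_cons (u : List ℕ) (m : ℕ) (v : List ℕ) :
    desL (u ++ m :: v) = desL (u ++ [m]) + desL (m :: v) := by
  induction u with
  | nil => simp [desL_cons, desL]
  | cons x u' ih =>
    rw [List.cons_append, List.cons_append, desL_cons, desL_cons, ih]
    cases u' with
    | nil => simp; ring
    | cons y t => simp; ring

theorem desL_append_single (u : List ℕ) (m : ℕ) (hu : ∀ x ∈ u, x < m) :
    desL (u ++ [m]) = desL u := by
  induction u with
  | nil => simp [desL]
  | cons x u' ih =>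
    rw [List.cons_append, desL_cons, desL_cons]
    have h := hu x (by simp)
    cases u' with
    | nil => simp [Nat.not_lt.mpr (le_of_lt h), desL]
    | cons y t =>
      rw [ih (fun z hz => hu z (by simp [hz]))]
      simp



theorem desL_map (f : ℕ → ℕ) :
    ∀ (l : List ℕ), (∀ x ∈ l, ∀ y ∈ l, (f x < f y ↔ x < y)) → desL (l.map f) = desL l
  | [] , _ => rfl
  | [a], _ => rfl
  | a :: b :: t, h => by
    have ih := desL_map f (b :: t) (fun x hx y hy => h x (by simp [List.mem_cons] at hx ⊢; tauto) y (by simp [List.mem_cons] at hy ⊢; tauto))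
    simp only [List.map_cons, desL, ih]
    congr 1
    simp [h b (by simp) a (by simp)]

theorem AvoidL.sublist {l l' : List ℕ} (h : AvoidL l) (hs : l' <+ l) : AvoidL l' :=
  fun x y z hxyz => h x y z (hxyz.trans hs)

theorem AvoidL.map {l : List ℕ} (f : ℕ → ℕ)
    (hf : ∀ x ∈ l, ∀ y ∈ l, (f x < f y ↔ x < y)) (h : AvoidL l) : AvoidL (l.map f) := by
  intro x y z hs hc
  rcases List.sublist_map_iff.mp hs with ⟨l'', hsub, heq⟩
  match l'', heq with
  | [x', y', z'], heq =>
    simp only [List.map_cons, List.map_nil, List.cons.injEq] at heq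
    obtain ⟨hx, hy, hz, -⟩ := heq
    have mx : x' ∈ l := hsub.subset (show x' ∈ [x',y',z'] by simp)
    have my : y' ∈ l := hsub.subset (show y' ∈ [x',y',z'] by simp)
    have mz : z' ∈ l := hsub.subset (show z' ∈ [x',y',z'] by simp)
    refine h x' y' z' hsub ⟨?_, ?_⟩
    · exact (hf x' mx z' mz).mp (by rw [← hx, ← hz]; exact hc.1)
    · exact (hf z' mz y' my).mp (by rw [← hy, ← hz]; exact hc.2)

theorem perm_range_of {l : List ℕ} {m : ℕ} (hnd : l.Nodup) (hlt : ∀ x ∈ l, x < m)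
    (hlen : l.length = m) : l ~ List.range m := by
  have h1 : l.toFinset ⊆ Finset.range m := by
    intro x hx; simp only [List.mem_toFinset] at hx; exact Finset.mem_range.mpr (hlt x hx)
  have h2 : l.toFinset.card = m := by rw [List.toFinset_card_of_nodup hnd, hlen]
  have h3 : l.toFinset = Finset.range m :=
    Finset.eq_of_subset_of_card_le h1 (by rw [h2, Finset.card_range])
  have h4 : (l : Multiset ℕ) = ((List.range m : List ℕ) : Multiset ℕ) := by
    apply Multiset.Nodup.toFinset_inj (by exact_mod_cast hnd)
      (by exact_mod_cast List.nodup_range (n := m))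
    show l.toFinset = (List.range m).toFinset
    rw [h3]
    ext x
    simp
  exact Multiset.coe_eq_coe.mp h4

def phi (l : List ℕ) : List ℕ :=
  if h : l.idxOf (l.length - 1) < l.length then
    ((phi (l.drop (l.idxOf (l.length - 1) + 1))).map (· + l.idxOf (l.length - 1)))
      ++ (l.length - 1) ::
        (phi ((l.take (l.idxOf (l.length - 1))).map (· - (l.length - 1 - l.idxOf (l.length - 1)))))
  else []
termination_by l.length
decreasing_by
  · simp; omega
  · simp [List.length_take]
    omega

theorem phi_nil : phi [] = [] := by rw [phi]; simp

theorem phi_eq (l : List ℕ) (h : l.idxOf (l.length - 1) < l.length) :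
    phi l = ((phi (l.drop (l.idxOf (l.length - 1) + 1))).map (· + l.idxOf (l.length - 1)))
      ++ (l.length - 1) ::
        (phi ((l.take (l.idxOf (l.length - 1))).map (· - (l.length - 1 - l.idxOf (l.length - 1))))) := by
  rw [phi]; simp [h]

theorem AvoidL_append_cons {u v : List ℕ} {M : ℕ}
    (hu : AvoidL u) (hv : AvoidL v) (huM : ∀ x ∈ u, x < M) (hvM : ∀ x ∈ v, x < M)
    (huv : ∀ x ∈ u, ∀ y ∈ v, y < x) : AvoidL (u ++ M :: v) := by
  rintro x y z hs ⟨h1, h2⟩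
  rcases List.sublist_append_iff.mp hs with ⟨s, t, heq, hsu, htv⟩
  match s, heq with
  | [], heq =>
    simp only [List.nil_append] at heq
    subst heq
    rcases List.sublist_cons_iff.mp htv with h | ⟨r, hr, hrv⟩
    · exact hv x y z h ⟨h1, h2⟩
    · injection hr with hx hr2
      subst hx hr2
      have hy : y ∈ v := hrv.subset (by simp)
      have := hvM y hy
      omega
  | [a], heq =>
    simp only [List.cons_append, List.nil_append, List.cons.injEq] at heq
    obtain ⟨rfl, rfl⟩ := heq
    have hx : x ∈ u := List.singleton_sublist.mp hsu
    have hz : z ∈ M :: v := htv.subset (by simp)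
    rcases List.mem_cons.mp hz with rfl | hz
    · have hy : y ∈ z :: v := htv.subset (by simp)
      rcases List.mem_cons.mp hy with rfl | hy
      · omega
      · have := hvM y hy; omega
    · have := huv x hx z hz; omega
  | [a, b], heq =>
    simp only [List.cons_append, List.nil_append, List.cons.injEq] at heq
    obtain ⟨rfl, rfl, rfl⟩ := heq
    have hx : x ∈ u := hsu.subset (by simp)
    have hy : y ∈ u := hsu.subset (by simp)
    have hz : z ∈ M :: v := htv.subset (by simp)
    rcases List.mem_cons.mp hz with rfl | hz
    · have := huM y hy; omega
    · have := huv x hx z hz; omega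
  | [a, b, c], heq =>
    have hlen := congrArg List.length heq
    simp only [List.length_append, List.length_cons, List.length_nil] at hlen
    have ht : t = [] := List.length_eq_zero_iff.mp (by omega)
    subst ht
    simp only [List.append_nil, List.cons.injEq] at heq
    obtain ⟨rfl, rfl, rfl, -⟩ := heq
    exact hu x y z hsu ⟨h1, h2⟩
  | a :: b :: c :: d :: s', heq =>
    have hlen := congrArg List.length heq
    simp only [List.length_append, List.length_cons, List.length_nil] at hlen
    omega

theorem phi_main : ∀ (n : ℕ) (l : List ℕ), l.length = n → l ~ List.range n → AvoidL l →
    (phi l ~ List.range n ∧ AvoidL (phi l) ∧ phi (phi l) = l ∧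
      (0 < n → desL (phi l) + desL l + 1 = n)) := by
  intro n
  induction n using Nat.strong_induction_on with
  | _ n IH =>
    intro l hlen hstd hav
    rcases Nat.eq_zero_or_pos n with rfl | hn
    · have hl : l = [] := List.length_eq_zero_iff.mp hlen
      subst hl
      refine ⟨by simp [phi_nil], ?_, by simp [phi_nil], by omega⟩
      intro x y z hs
      rw [phi_nil] at hs
      simp at hs
    -- main case
    have hnd : l.Nodup := (List.Perm.nodup_iff hstd).mpr (List.nodup_range (n := n))
    have hmem : ∀ x, x ∈ l ↔ x < n := by
      intro x; rw [List.Perm.mem_iff hstd, List.mem_range]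
    have hM : (n - 1) ∈ l := (hmem _).mpr (by omega)
    set i := l.idxOf (n - 1) with hidef
    have hi : i < n := by rw [← hlen]; exact List.idxOf_lt_length_iff.mpr hM
    set α := l.take i with hαdef
    set β := l.drop (i + 1) with hβdef
    have hgeti : l[i]'(by omega) = n - 1 := by
      exact List.getElem_idxOf (by rw [hlen]; exact hi)
    have hdecomp : l = α ++ (n - 1) :: β := by
      conv_lhs => rw [← List.take_append_drop i l]
      rw [List.drop_eq_getElem_cons (by omega), hgeti]
    have hαlen : α.length = i := by
      rw [hαdef, List.length_take]; omega
    have hβlen : β.length = n - 1 - i := by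
      rw [hβdef, List.length_drop, hlen]
      omega
    set a := i
    set b := n - 1 - i with hbdef
    -- nodup pieces
    have hnd2 : (α ++ (n - 1) :: β).Nodup := hdecomp ▸ hnd
    rw [List.nodup_append'] at hnd2
    obtain ⟨hαnd, hcons_nd, hdisj⟩ := hnd2
    rw [List.nodup_cons] at hcons_nd
    obtain ⟨hMβ, hβnd⟩ := hcons_nd
    have hMα : (n - 1) ∉ α := fun h => (List.disjoint_left.mp hdisj h) (by simp)
    -- membership facts
    have hαmem : ∀ x ∈ α, x < n - 1 := by
      intro x hx
      have h1 : x ∈ l := hdecomp ▸ (by simp [hx])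
      have h2 := (hmem x).mp h1
      have : x ≠ n - 1 := fun h => hMα (h ▸ hx)
      omega
    have hβmem : ∀ x ∈ β, x < n - 1 := by
      intro x hx
      have h1 : x ∈ l := hdecomp ▸ (by simp [hx])
      have h2 := (hmem x).mp h1
      have : x ≠ n - 1 := fun h => hMβ (h ▸ hx)
      omega
    -- avoidance pieces
    have hαav : AvoidL α := hav.sublist (hαdef ▸ List.take_sublist _ _)
    have hβav : AvoidL β := hav.sublist (hβdef ▸ List.drop_sublist _ _)
    -- cross inequality
    have hcross : ∀ x ∈ α, ∀ y ∈ β, y < x := by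
      intro x hx y hy
      by_contra hc
      push_neg at hc
      have hxy : x ≠ y := fun h => (List.disjoint_left.mp hdisj hx) (by simp [h, hy])
      have hxy' : x < y := by omega
      have hsub : [x, n - 1, y] <+ α ++ (n - 1) :: β := by
        have h1 : [x] <+ α := List.singleton_sublist.mpr hx
        have h2 : [n - 1, y] <+ (n - 1) :: β :=
          List.Sublist.cons₂ _ (List.singleton_sublist.mpr hy)
        exact h1.append h2
      exact hav x (n - 1) y (hdecomp ▸ hsub) ⟨hxy', hβmem y hy⟩
    -- value ranges
    have hβlt : ∀ y ∈ β, y < b := by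
      intro y hy
      have hsub : insert (n - 1) α.toFinset ⊆ Finset.Ico (y + 1) n := by
        intro z hz
        rcases Finset.mem_insert.mp hz with rfl | hz
        · have := hβmem y hy
          simp only [Finset.mem_Ico]
          omega
        · rw [List.mem_toFinset] at hz
          have h1 := hcross z hz y hy
          have h2 := hαmem z hz
          simp only [Finset.mem_Ico]
          omega
      have hcard := Finset.card_le_card hsub
      rw [Finset.card_insert_of_notMem (by rw [List.mem_toFinset]; exact hMα),
        List.toFinset_card_of_nodup hαnd, hαlen, Nat.card_Ico] at hcard
      omega
    have hβstd : β ~ List.range b := perm_range_of hβnd hβlt hβlen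
    have hαge : ∀ x ∈ α, b ≤ x := by
      intro x hx
      have hsub : β.toFinset ⊆ Finset.range x := by
        intro z hz
        rw [List.mem_toFinset] at hz
        exact Finset.mem_range.mpr (hcross x hx z hz)
      have hcard := Finset.card_le_card hsub
      rw [List.toFinset_card_of_nodup hβnd, hβlen, Finset.card_range] at hcard
      exact hcard
    set α' := α.map (· - b) with hα'def
    have hα'len : α'.length = a := by rw [hα'def, List.length_map, hαlen]
    have hα'nd : α'.Nodup := by
      refine List.Nodup.map_on ?_ hαnd
      intro x hx y hy hxy
      have := hαge x hx; have := hαge y hy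
      omega
    have habn : a + b + 1 = n := by omega
    have hα'lt : ∀ x ∈ α', x < a := by
      intro x hx
      rw [hα'def, List.mem_map] at hx
      obtain ⟨w, hw, rfl⟩ := hx
      have := hαmem w hw; have := hαge w hw
      omega
    have hα'std : α' ~ List.range a := perm_range_of hα'nd hα'lt hα'len
    have hα'av : AvoidL α' := by
      refine AvoidL.map _ ?_ hαav
      intro x hx y hy
      have := hαge x hx; have := hαge y hy
      constructor <;> omega
    -- recursive calls
    have hb_lt : b < n := by omega
    have ha_lt : a < n := by omega
    obtain ⟨Pβstd, Pβav, Pβinv, Pβdes⟩ := IH b hb_lt β hβlen hβstd hβav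
    obtain ⟨Pαstd, Pαav, Pαinv, Pαdes⟩ := IH a ha_lt α' hα'len hα'std hα'av
    set mβ := (phi β).map (· + a) with hmβdef
    set mα := phi α' with hmαdef
    have hmβlen : mβ.length = b := by
      rw [hmβdef, List.length_map, Pβstd.length_eq, List.length_range]
    have hmαlen : mα.length = a := by
      rw [hmαdef, Pαstd.length_eq, List.length_range]
    have hphil : phi l = mβ ++ (n - 1) :: mα := by
      rw [phi_eq l (by rw [hlen]; exact hi), hlen]
    have hmβmem : ∀ x ∈ mβ, a ≤ x ∧ x < n - 1 := by
      intro x hx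
      rw [hmβdef, List.mem_map] at hx
      obtain ⟨w, hw, rfl⟩ := hx
      have : w < b := List.mem_range.mp (Pβstd.mem_iff.mp hw)
      omega
    have hmαmem : ∀ x ∈ mα, x < a := by
      intro x hx
      exact List.mem_range.mp (Pαstd.mem_iff.mp hx)
    -- Goal 1: permutation
    have hmβnd : mβ.Nodup := by
      refine List.Nodup.map (fun x y h => by omega) ?_
      exact (List.Perm.nodup_iff Pβstd).mpr (List.nodup_range (n := b))
    have hmαnd : mα.Nodup := (List.Perm.nodup_iff Pαstd).mpr (List.nodup_range (n := a))
    have hphind : (phi l).Nodup := by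
      rw [hphil, List.nodup_append', List.nodup_cons]
      refine ⟨hmβnd, ⟨fun h => by have := hmαmem _ h; omega, hmαnd⟩, ?_⟩
      rw [List.disjoint_left]
      intro x hx hx2
      have h1 := hmβmem x hx
      rcases List.mem_cons.mp hx2 with rfl | hx3
      · omega
      · have := hmαmem x hx3; omega
    have hphilen : (phi l).length = n := by
      rw [hphil]
      simp only [List.length_append, List.length_cons, hmβlen, hmαlen]
      omega
    have hphimem : ∀ x ∈ phi l, x < n := by
      intro x hx
      rw [hphil] at hx
      rcases List.mem_append.mp hx with h | h
      · have := hmβmem x h; omega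
      · rcases List.mem_cons.mp h with rfl | h
        · omega
        · have := hmαmem x h; omega
    have G1 : phi l ~ List.range n := perm_range_of hphind hphimem hphilen
    -- Goal 2: avoidance
    have hmβav : AvoidL mβ := by
      refine AvoidL.map _ (fun x _ y _ => by constructor <;> omega) Pβav
    have G2 : AvoidL (phi l) := by
      rw [hphil]
      refine AvoidL_append_cons hmβav Pαav ?_ ?_ ?_
      · intro x hx; exact (hmβmem x hx).2
      · intro x hx; have := hmαmem x hx; omega
      · intro x hx y hy
        have := (hmβmem x hx).1; have := hmαmem y hy
        omega
    -- Goal 3: involution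
    have hidx2 : (phi l).idxOf (n - 1) = b := by
      rw [hphil, List.idxOf_append_of_notMem (fun h => by have := hmβmem _ h; omega),
        List.idxOf_cons_self, hmβlen]
      omega
    have hdrop2 : (phi l).drop (b + 1) = mα := by
      rw [hphil]
      have : mβ ++ (n - 1) :: mα = (mβ ++ [n - 1]) ++ mα := by simp
      rw [this]
      have hl2 : (mβ ++ [n - 1]).length = b + 1 := by simp [hmβlen]
      rw [← hl2, List.drop_left]
    have htake2 : (phi l).take b = mβ := by
      rw [hphil]
      exact List.take_left' hmβlen
    have hnb : n - 1 - b = a := by omega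
    have hmβback : mβ.map (· - a) = phi β := by
      rw [hmβdef, List.map_map]
      have : ∀ x ∈ phi β, ((· - a) ∘ (· + a)) x = x := by
        intro x _; simp
      rw [List.map_congr_left this]; exact List.map_id _
    have G3 : phi (phi l) = l := by
      rw [phi_eq (phi l) (by rw [hphilen, hidx2]; omega), hphilen, hidx2, hdrop2, htake2,
        hnb, hmβback, Pβinv, hmαdef, Pαinv]
      have : α'.map (· + b) = α := by
        rw [hα'def, List.map_map]
        have h2 : ∀ x ∈ α, ((· + b) ∘ (· - b)) x = x := by
          intro x hx
          have := hαge x hx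
          simp
          omega
        rw [List.map_congr_left h2]; exact List.map_id _
      rw [this, ← hdecomp]
    -- Goal 4: descents
    have hdesα : desL α' = desL α := by
      rw [hα'def]
      refine desL_map _ α ?_
      intro x hx y hy
      have := hαge x hx; have := hαge y hy
      constructor <;> omega
    have hdesmβ : desL mβ = desL (phi β) := by
      rw [hmβdef]
      exact desL_map _ _ (fun x _ y _ => by constructor <;> omega)
    have hauxβ : desL ((n - 1) :: β) = desL β + (if b = 0 then 0 else 1) := by
      rw [desL_cons]
      cases hβe : β with
      | nil =>
        have : b = 0 := by rw [← hβlen, hβe]; rfl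
        simp [this]
      | cons y t =>
        have hb0 : b ≠ 0 := by rw [← hβlen, hβe]; simp
        have hy : y < n - 1 := hβmem y (by rw [hβe]; simp)
        simp only [List.headD_cons, if_neg hb0]
        simp [show y < n - 1 by omega]
    have hauxα : desL ((n - 1) :: mα) = desL mα + (if a = 0 then 0 else 1) := by
      rw [desL_cons]
      cases hmαe : mα with
      | nil =>
        have : a = 0 := by rw [← hmαlen, hmαe]; rfl
        simp [this]
      | cons y t =>
        have ha0 : a ≠ 0 := by rw [← hmαlen, hmαe]; simp
        have hy : y < a := hmαmem y (by rw [hmαe]; simp)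
        simp only [List.headD_cons, if_neg ha0]
        simp [show y < n - 1 by omega]
    have hdl : desL l = desL α + (desL β + (if b = 0 then 0 else 1)) := by
      rw [hdecomp, desL_append_cons, desL_append_single α _ hαmem, hauxβ]
    have hdp : desL (phi l) =
        desL (phi β) + (desL mα + (if a = 0 then 0 else 1)) := by
      rw [hphil, desL_append_cons,
        desL_append_single mβ _ (fun x hx => (hmβmem x hx).2), hdesmβ, hauxα]
    have e1 : desL (phi β) + desL β + (if b = 0 then 0 else 1) = b := by
      rcases Nat.eq_zero_or_pos b with h | h
      · have hβ0 : β = [] := List.length_eq_zero_iff.mp (by rw [hβlen]; omega)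
        rw [hβ0, phi_nil]
        simp [desL_nil, h]
      · have := Pβdes h
        rw [if_neg (by omega)]
        omega
    have e2 : desL mα + desL α' + (if a = 0 then 0 else 1) = a := by
      rcases Nat.eq_zero_or_pos a with h | h
      · have hα0 : α' = [] := List.length_eq_zero_iff.mp (by rw [hα'len]; omega)
        rw [hmαdef, hα0, phi_nil]
        simp [desL_nil, h]
      · have := Pαdes h
        rw [if_neg (by omega)]
        omega
    have G4 : 0 < n → desL (phi l) + desL l + 1 = n := by
      intro _
      rw [hdl, hdp, ← hdesα]
      omega
    exact ⟨G1, G2, G3, G4⟩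
theorem sum_shift (m : ℕ) (f h : ℕ → ℕ) (h0 : h 0 = 0) (hstep : ∀ i, f (i+2) = h (i+1)) :
    ∑ i ∈ Finset.range (m+1+1), f i = (∑ i ∈ Finset.range (m+1), h i) + f 1 + f 0 := by
  rw [Finset.sum_range_succ' f, Finset.sum_range_succ' (fun i => f (i+1)),
    Finset.sum_range_succ' h, h0]
  have : ∀ i ∈ Finset.range m, f (i+1+1) = h (i+1) := fun i _ => hstep i
  rw [Finset.sum_congr rfl this]
  ring

theorem desL_sum : ∀ (l : List ℕ), desL l = ∑ i ∈ Finset.range l.length,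
    (if 1 ≤ i ∧ i < l.length ∧ l.getD i 0 < l.getD (i-1) 0 then 1 else 0)
  | [] => by simp [desL]
  | [a] => by
    show 0 = _
    rw [show [a].length = 1 from rfl, Finset.sum_range_one]
    simp
  | a :: b :: t => by
    have ih := desL_sum (b :: t)
    have hlen : (a :: b :: t).length = t.length + 1 + 1 := by simp
    have hlen2 : (b :: t).length = t.length + 1 := by simp
    rw [desL_cons₂, ih, hlen, hlen2]
    rw [sum_shift t.length _
      (fun i => if 1 ≤ i ∧ i < t.length + 1 ∧ (b::t).getD i 0 < (b::t).getD (i-1) 0 then 1 else 0)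
      (by simp) ?_]
    · have hf1 : (if 1 ≤ 1 ∧ 1 < t.length + 1 + 1 ∧ (a::b::t).getD 1 0 < (a::b::t).getD 0 0 then 1 else 0)
          = (if b < a then 1 else 0) := by
        have : (1 ≤ 1 ∧ 1 < t.length + 1 + 1 ∧ (a::b::t).getD 1 0 < (a::b::t).getD 0 0) ↔ b < a := by
          simp [List.getD_cons_succ, List.getD_cons_zero]
        rw [if_congr this rfl rfl]
      have hf0 : (if 1 ≤ 0 ∧ 0 < t.length + 1 + 1 ∧ (a::b::t).getD 0 0 < (a::b::t).getD (0-1) 0 then 1 else 0) = 0 := by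
        simp
      rw [hf1, hf0]
      ring
    · intro i
      have hc : (1 ≤ i+2 ∧ i+2 < t.length + 1 + 1 ∧ (a::b::t).getD (i+2) 0 < (a::b::t).getD (i+2-1) 0)
          ↔ (1 ≤ i+1 ∧ i+1 < t.length + 1 ∧ (b::t).getD (i+1) 0 < (b::t).getD (i+1-1) 0) := by
        have e1 : (a::b::t).getD (i+2) 0 = (b::t).getD (i+1) 0 := by
          simp [List.getD_cons_succ]
        have e2 : (a::b::t).getD (i+2-1) 0 = (b::t).getD (i+1-1) 0 := by
          simp [List.getD_cons_succ]
        rw [e1, e2]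
        constructor <;> rintro ⟨h1, h2, h3⟩ <;> exact ⟨by omega, by omega, h3⟩
      rw [if_congr hc rfl rfl]

def toL {n : ℕ} (p : Equiv.Perm (Fin n)) : List ℕ := List.ofFn (fun i => (p i : ℕ))

theorem toL_length {n : ℕ} (p : Equiv.Perm (Fin n)) : (toL p).length = n := by
  simp [toL]

theorem toL_getElem {n : ℕ} (p : Equiv.Perm (Fin n)) (i : ℕ) (h : i < n) :
    (toL p)[i]'(by rw [toL_length]; exact h) = (p ⟨i, h⟩ : ℕ) := by
  simp [toL]

theorem descard {n : ℕ} (p : Equiv.Perm (Fin n)) : (DescentSet p).card = desL (toL p) := by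
  rw [DescentSet, desL_sum, Finset.card_filter, toL_length]
  refine Finset.sum_congr rfl ?_
  intro i hi
  have hin : i < n := Finset.mem_range.mp hi
  congr 1
  apply propext
  constructor
  · rintro ⟨⟨h1, h2⟩, h3⟩
    refine ⟨h1, h2, ?_⟩
    rw [List.getD_eq_getElem _ _ (by rw [toL_length]; exact h2),
      List.getD_eq_getElem _ _ (by rw [toL_length]; omega),
      toL_getElem p i h2, toL_getElem p (i-1) (by omega)]
    exact h3
  · rintro ⟨h1, h2, h3⟩
    refine ⟨⟨h1, h2⟩, ?_⟩
    rw [List.getD_eq_getElem _ _ (by rw [toL_length]; exact h2),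
      List.getD_eq_getElem _ _ (by rw [toL_length]; omega),
      toL_getElem p i h2, toL_getElem p (i-1) (by omega)] at h3
    exact h3
theorem avoids_iff {n : ℕ} (p : Equiv.Perm (Fin n)) : Avoids132 p ↔ AvoidL (toL p) := by
  constructor
  · intro hp x y z hs hc
    rcases List.sublist_iff_exists_fin_orderEmbedding_get_eq.mp hs with ⟨f, hf⟩
    apply hp
    have hlen : (toL p).length = n := toL_length p
    have g : ∀ m : Fin ([x,y,z] : List ℕ).length, (f m : ℕ) < n := fun m => by
      have := (f m).isLt; omega
    refine ⟨⟨f ⟨0, by simp⟩, g _⟩, ⟨f ⟨1, by simp⟩, g _⟩, ⟨f ⟨2, by simp⟩, g _⟩, ?_, ?_, ?_, ?_⟩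
    · exact f.strictMono (by simp [Fin.lt_def])
    · exact f.strictMono (by simp [Fin.lt_def])
    · -- p at f 0 < p at f 2
      have h0 := hf ⟨0, by simp⟩
      have h2 := hf ⟨2, by simp⟩
      simp only [List.get_eq_getElem] at h0 h2
      have e0 : ([x,y,z] : List ℕ)[(0:ℕ)] = x := rfl
      have e2 : ([x,y,z] : List ℕ)[(2:ℕ)] = z := rfl
      rw [Fin.lt_def]
      have q0 : (toL p)[(f ⟨0, by simp⟩ : ℕ)]'(by omega) = (p ⟨f ⟨0, by simp⟩, g _⟩ : ℕ) :=
        toL_getElem p _ (g _)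
      have q2 : (toL p)[(f ⟨2, by simp⟩ : ℕ)]'(by omega) = (p ⟨f ⟨2, by simp⟩, g _⟩ : ℕ) :=
        toL_getElem p _ (g _)
      rw [e0] at h0; rw [e2] at h2
      rw [show ((p ⟨f ⟨0,by simp⟩, g _⟩ : Fin n) : ℕ) = x from by rw [← q0]; exact h0.symm,
        show ((p ⟨f ⟨2,by simp⟩, g _⟩ : Fin n) : ℕ) = z from by rw [← q2]; exact h2.symm]
      exact hc.1
    · have h1 := hf ⟨1, by simp⟩
      have h2 := hf ⟨2, by simp⟩
      simp only [List.get_eq_getElem] at h1 h2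
      have e1 : ([x,y,z] : List ℕ)[(1:ℕ)] = y := rfl
      have e2 : ([x,y,z] : List ℕ)[(2:ℕ)] = z := rfl
      rw [Fin.lt_def]
      have q1 : (toL p)[(f ⟨1, by simp⟩ : ℕ)]'(by omega) = (p ⟨f ⟨1, by simp⟩, g _⟩ : ℕ) :=
        toL_getElem p _ (g _)
      have q2 : (toL p)[(f ⟨2, by simp⟩ : ℕ)]'(by omega) = (p ⟨f ⟨2, by simp⟩, g _⟩ : ℕ) :=
        toL_getElem p _ (g _)
      rw [e1] at h1; rw [e2] at h2
      rw [show ((p ⟨f ⟨1,by simp⟩, g _⟩ : Fin n) : ℕ) = y from by rw [← q1]; exact h1.symm,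
        show ((p ⟨f ⟨2,by simp⟩, g _⟩ : Fin n) : ℕ) = z from by rw [← q2]; exact h2.symm]
      exact hc.2
  · rintro hL ⟨i, j, k, hij, hjk, h1, h2⟩
    have hs := triple_sublist (toL p) i j k hij hjk (by rw [toL_length]; exact k.isLt)
    have ei : (toL p)[(i:ℕ)]'(by rw [toL_length]; exact i.isLt) = (p i : ℕ) := by
      rw [toL_getElem p i i.isLt]
    have ej : (toL p)[(j:ℕ)]'(by rw [toL_length]; exact j.isLt) = (p j : ℕ) := by
      rw [toL_getElem p j j.isLt]
    have ek : (toL p)[(k:ℕ)]'(by rw [toL_length]; exact k.isLt) = (p k : ℕ) := by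
      rw [toL_getElem p k k.isLt]
    rw [ei, ej, ek] at hs
    exact hL _ _ _ hs ⟨h1, h2⟩

theorem toL_perm {n : ℕ} (p : Equiv.Perm (Fin n)) : toL p ~ List.range n := by
  refine perm_range_of ?_ ?_ (toL_length p)
  · rw [toL, List.nodup_ofFn]
    exact Fin.val_injective.comp p.injective
  · intro x hx
    rw [toL, List.mem_ofFn] at hx
    obtain ⟨i, rfl⟩ := hx
    exact (p i).isLt

noncomputable def permOf {n : ℕ} (l : List ℕ) (h : l ~ List.range n) : Equiv.Perm (Fin n) :=
  Equiv.ofBijective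
    (fun i => ⟨l.getD i 0, by
      have hlen : l.length = n := by rw [h.length_eq, List.length_range]
      have hm : l.getD (i : ℕ) 0 ∈ l := by
        rw [List.getD_eq_getElem _ _ (by rw [hlen]; exact i.isLt)]
        exact List.getElem_mem _
      exact List.mem_range.mp (h.mem_iff.mp hm)⟩)
    (by
      rw [← Finite.injective_iff_bijective]
      intro i j hij
      have hlen : l.length = n := by rw [h.length_eq, List.length_range]
      have hnd : l.Nodup := h.nodup_iff.mpr (List.nodup_range (n := n))
      simp only [Fin.mk.injEq] at hij
      rw [List.getD_eq_getElem _ _ (by rw [hlen]; exact i.isLt),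
          List.getD_eq_getElem _ _ (by rw [hlen]; exact j.isLt)] at hij
      exact Fin.ext ((List.Nodup.getElem_inj_iff hnd).mp hij))

theorem toL_permOf {n : ℕ} (l : List ℕ) (h : l ~ List.range n) : toL (permOf l h) = l := by
  have hlen : l.length = n := by rw [h.length_eq, List.length_range]
  refine List.ext_getElem (by rw [toL_length, hlen]) ?_
  intro i h1 h2
  have hi : i < n := by rw [toL_length] at h1; exact h1
  rw [toL_getElem _ i hi]
  show l.getD i 0 = l[i]
  exact List.getD_eq_getElem _ _ h2

theorem permOf_toL {n : ℕ} (p : Equiv.Perm (Fin n)) (h : toL p ~ List.range n) :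
    permOf (toL p) h = p := by
  apply Equiv.ext
  intro i
  apply Fin.ext
  show (toL p).getD (i : ℕ) 0 = (p i : ℕ)
  rw [List.getD_eq_getElem _ _ (by rw [toL_length]; exact i.isLt), toL_getElem p i i.isLt]

noncomputable def equivPL (n k : ℕ) :
    {p : Equiv.Perm (Fin n) // Avoids132 p ∧ (DescentSet p).card = k} ≃
    {l : List ℕ // (l ~ List.range n) ∧ AvoidL l ∧ desL l = k} where
  toFun p := ⟨toL p.1, toL_perm p.1, (avoids_iff p.1).mp p.2.1, by rw [← descard]; exact p.2.2⟩
  invFun l := ⟨permOf l.1 l.2.1, by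
    have ht : toL (permOf l.1 l.2.1) = l.1 := toL_permOf l.1 l.2.1
    refine ⟨(avoids_iff _).mpr (by rw [ht]; exact l.2.2.1), ?_⟩
    rw [descard, ht]
    exact l.2.2.2⟩
  left_inv p := Subtype.ext (permOf_toL p.1 (toL_perm p.1))
  right_inv l := Subtype.ext (toL_permOf l.1 l.2.1)


/-- For `0 ≤ k ≤ n-1`, the number of 132-avoiding permutations of `[n]`
with exactly `k` descents equals the number of those with exactly `n-1-k` descents. -/
theorem stmt_4 (n k : ℕ) (hn : 0 < n) (hk : k ≤ n - 1) :
    Nat.card {p : Equiv.Perm (Fin n) // Avoids132 p ∧ (DescentSet p).card = k} =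
    Nat.card {p : Equiv.Perm (Fin n) // Avoids132 p ∧ (DescentSet p).card = n - 1 - k} := by
  refine Nat.card_congr ((equivPL n k).trans (Equiv.trans ?_ (equivPL n (n - 1 - k)).symm))
  refine
    { toFun := fun l => ⟨phi l.1, ?_⟩
      invFun := fun l => ⟨phi l.1, ?_⟩
      left_inv := fun l => ?_
      right_inv := fun l => ?_ }
  · obtain ⟨hstd, hav, hdes⟩ := l.2
    have hlen : l.1.length = n := by rw [hstd.length_eq, List.length_range]
    obtain ⟨G1, G2, G3, G4⟩ := phi_main n l.1 hlen hstd hav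
    exact ⟨G1, G2, by have := G4 hn; omega⟩
  · obtain ⟨hstd, hav, hdes⟩ := l.2
    have hlen : l.1.length = n := by rw [hstd.length_eq, List.length_range]
    obtain ⟨G1, G2, G3, G4⟩ := phi_main n l.1 hlen hstd hav
    exact ⟨G1, G2, by have := G4 hn; omega⟩
  · obtain ⟨hstd, hav, hdes⟩ := l.2
    have hlen : l.1.length = n := by rw [hstd.length_eq, List.length_range]
    obtain ⟨G1, G2, G3, G4⟩ := phi_main n l.1 hlen hstd hav
    exact Subtype.ext G3
  · obtain ⟨hstd, hav, hdes⟩ := l.2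
    have hlen : l.1.length = n := by rw [hstd.length_eq, List.length_range]
    obtain ⟨G1, G2, G3, G4⟩ := phi_main n l.1 hlen hstd hav
    exact Subtype.ext G3
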